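/- For the unit-weighted complete graph on N ≥ 3 vertices with L = N·I - O (O the all-ones matrix) and Δ = diag(0, N, ..., N), the matrix K(α) = L - αΔ has, for every α ≠ 0, an eigenvalue N(1 - α) of multiplicity exactly N - 2; the remaining two eigenvalues are 1 - αN - (2 - N(α+1) ± √((N(α+1)-2)² + 4(N-1)))/2. -/
import Mathlib
open Matrix BigOperators

private lemma kmulVec (N : ℕ) (α : ℝ) (v : Fin N → ℝ) (i : Fin N) :
    ((((N : ℝ) • (1 : Matrix (Fin N) (Fin N) ℝ) - Matrix.of fun _ _ => (1 : ℝ)) -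
        α • Matrix.diagonal (fun i : Fin N => if (i : ℕ) = 0 then 0 else (N : ℝ))) *ᵥ v) i
      = (N : ℝ) * v i - (∑ j, v j) - α * ((if (i : ℕ) = 0 then 0 else (N : ℝ)) * v i) := by
  rw [Matrix.sub_mulVec, Matrix.sub_mulVec, Matrix.smul_mulVec, Matrix.smul_mulVec,
    Matrix.one_mulVec]
  simp only [Pi.sub_apply, Pi.smul_apply, smul_eq_mul, Matrix.mulVec_diagonal]
  simp [Matrix.mulVec, dotProduct]

private lemma aux_eig (N : ℕ) (hN : 3 ≤ N) (α lam : ℝ)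
    (hquad : lam ^ 2 - ((N : ℝ) - α * N) * lam - α * N * ((N : ℝ) - 1) = 0) :
    Module.End.HasEigenvalue
      (Matrix.toLin'
        (((N : ℝ) • (1 : Matrix (Fin N) (Fin N) ℝ) - Matrix.of fun _ _ => (1 : ℝ)) -
          α • Matrix.diagonal (fun i : Fin N => if (i : ℕ) = 0 then 0 else (N : ℝ)))) lam := by
  set a : ℝ := 1 - α * N - lam with ha
  set v : Fin N → ℝ := fun j => if (j : ℕ) = 0 then a else 1 with hv
  have hS : ∑ j, v j = a + ((N : ℝ) - 1) := by
    have h1 : ∀ j : Fin N, v j = (if j = (⟨0, by omega⟩ : Fin N) then a - 1 else 0) + 1 := by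
      intro j
      by_cases h : j = (⟨0, by omega⟩ : Fin N)
      · simp [hv, h]
      · have : (j : ℕ) ≠ 0 := fun hj => h (Fin.ext hj)
        simp [hv, this, h]
    rw [Finset.sum_congr rfl (fun j _ => h1 j), Finset.sum_add_distrib, Finset.sum_ite_eq']
    simp [Finset.card_univ]
    ring
  apply Module.End.hasEigenvalue_of_hasEigenvector (x := v)
  constructor
  · rw [Module.End.mem_eigenspace_iff, Matrix.toLin'_apply]
    funext i
    rw [kmulVec, hS]
    by_cases hi : (i : ℕ) = 0
    · simp only [hv, hi, if_true, Pi.smul_apply, smul_eq_mul]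
      -- N * a - (a + (N-1)) - α * (0 * a) = lam * a
      linear_combination hquad
    · simp only [hv, hi, if_false, Pi.smul_apply, smul_eq_mul]
      -- N * 1 - (a + (N-1)) - α * (N * 1) = lam * 1
      rw [ha]; ring
  · intro h
    have := congrFun h ⟨1, by omega⟩
    simp [hv] at this

theorem complete_graph_K_spectrum (N : ℕ) (hN : 3 ≤ N) (α : ℝ) (hα : α ≠ 0) :
    Module.finrank ℝ
      ↥(Module.End.eigenspace
          (Matrix.toLin'
            (((N : ℝ) • (1 : Matrix (Fin N) (Fin N) ℝ) - Matrix.of fun _ _ => (1 : ℝ)) -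
              α • Matrix.diagonal (fun i : Fin N => if (i : ℕ) = 0 then 0 else (N : ℝ))))
          ((N : ℝ) * (1 - α))) = N - 2 ∧
    Module.End.HasEigenvalue
      (Matrix.toLin'
        (((N : ℝ) • (1 : Matrix (Fin N) (Fin N) ℝ) - Matrix.of fun _ _ => (1 : ℝ)) -
          α • Matrix.diagonal (fun i : Fin N => if (i : ℕ) = 0 then 0 else (N : ℝ))))
      (1 - α * N -
        (2 - N * (α + 1) + Real.sqrt ((N * (α + 1) - 2) ^ 2 + 4 * (N - 1))) / 2) ∧
    Module.End.HasEigenvalue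
      (Matrix.toLin'
        (((N : ℝ) • (1 : Matrix (Fin N) (Fin N) ℝ) - Matrix.of fun _ _ => (1 : ℝ)) -
          α • Matrix.diagonal (fun i : Fin N => if (i : ℕ) = 0 then 0 else (N : ℝ))))
      (1 - α * N -
        (2 - N * (α + 1) - Real.sqrt ((N * (α + 1) - 2) ^ 2 + 4 * (N - 1))) / 2) := by
  have hN3 : (3 : ℝ) ≤ (N : ℝ) := by exact_mod_cast hN
  have hdisc : (0 : ℝ) ≤ (N * (α + 1) - 2) ^ 2 + 4 * (N - 1) := by
    nlinarith [sq_nonneg ((N : ℝ) * (α + 1) - 2)]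
  have hsq := Real.sq_sqrt hdisc
  refine ⟨?_, aux_eig N hN α _ (by nlinarith [hsq]), aux_eig N hN α _ (by nlinarith [hsq])⟩
  -- finrank part
  set f : (Fin N → ℝ) →ₗ[ℝ] ℝ × ℝ :=
    { toFun := fun v => (v ⟨0, by omega⟩, ∑ j, v j)
      map_add' := by intros; simp [Finset.sum_add_distrib]
      map_smul' := by intros; simp [Finset.mul_sum] } with hf
  have heq : Module.End.eigenspace
      (Matrix.toLin'
        (((N : ℝ) • (1 : Matrix (Fin N) (Fin N) ℝ) - Matrix.of fun _ _ => (1 : ℝ)) -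
          α • Matrix.diagonal (fun i : Fin N => if (i : ℕ) = 0 then 0 else (N : ℝ))))
      ((N : ℝ) * (1 - α)) = LinearMap.ker f := by
    ext v
    rw [Module.End.mem_eigenspace_iff, LinearMap.mem_ker, Matrix.toLin'_apply]
    simp only [hf, LinearMap.coe_mk, AddHom.coe_mk, Prod.mk_eq_zero]
    constructor
    · intro h
      have h0 := congrFun h ⟨0, by omega⟩
      have h1 := congrFun h ⟨1, by omega⟩
      rw [kmulVec] at h0 h1
      simp only [Pi.smul_apply, smul_eq_mul] at h0 h1
      norm_num at h0 h1
      have hSum : ∑ j, v j = 0 := by linarith [h1]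
      have h0' : α * (N : ℝ) * v ⟨0, by omega⟩ = 0 := by
        rw [hSum] at h0; nlinarith [h0]
      have hNne : (N : ℝ) ≠ 0 := by positivity
      have : v ⟨0, by omega⟩ = 0 := by
        rcases mul_eq_zero.mp h0' with h | h
        · exact absurd (mul_eq_zero.mp h) (by push_neg; exact ⟨hα, hNne⟩)
        · exact h
      exact ⟨this, hSum⟩
    · rintro ⟨h0, hS⟩
      funext i
      rw [kmulVec, hS]
      simp only [Pi.smul_apply, smul_eq_mul]
      by_cases hi : (i : ℕ) = 0
      · have : i = ⟨0, by omega⟩ := Fin.ext hi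
        rw [this, h0]; simp [hi]  -- careful
      · simp only [hi, if_false]; ring
  rw [heq]
  have hsurj : Function.Surjective f := by
    rintro ⟨x, y⟩
    refine ⟨Pi.single (⟨0, by omega⟩ : Fin N) x + Pi.single (⟨1, by omega⟩ : Fin N) (y - x), ?_⟩
    have hne : (⟨0, by omega⟩ : Fin N) ≠ ⟨1, by omega⟩ := by simp [Fin.ext_iff]
    simp only [hf, LinearMap.coe_mk, AddHom.coe_mk, Pi.add_apply, Finset.sum_add_distrib,
      Finset.sum_pi_single', Finset.mem_univ, if_true,
      Pi.single_eq_same, Pi.single_eq_of_ne hne]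
    norm_num
  have hrk := LinearMap.finrank_range_add_finrank_ker f
  rw [LinearMap.range_eq_top.mpr hsurj, finrank_top] at hrk
  have h1 : Module.finrank ℝ (ℝ × ℝ) = 2 := by
    simp [Module.finrank_prod]
  have h2 : Module.finrank ℝ (Fin N → ℝ) = N := by
    simp [Module.finrank_pi]
  omega
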